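/- Let n be a natural number and θ a real number with θ > 1. For 0 ≤ r ≤ n define f(r) = Σ_{π ∈ S_n} θ^{|{i ∈ Fin n : (i : ℕ) < r and π(i) = i}|}, the sum over all permutations π of Fin n of θ raised to the number of fixed points of π among the first r indices. Then f is strictly increasing on {0, 1, …, n}: for all integers r₂ < r₁ ≤ n one has f(r₂) < f(r₁). Consequently, for r₁, r₂ ≤ n, f(r₁) > f(r₂) if and only if r₁ > r₂. -/

import Mathlib

/-- For `θ > 1`, the function
`f(r) = ∑_{π ∈ S_n} θ^{#{i ∈ Fin n : (i : ℕ) < r ∧ π i = i}}`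
is strictly increasing on `{0, 1, …, n}`, and consequently for
`r₁, r₂ ≤ n` one has `f r₁ > f r₂ ↔ r₁ > r₂`. -/
theorem stmt1 (n : ℕ) (θ : ℝ) (hθ : 1 < θ)
    (f : ℕ → ℝ)
    (hf : ∀ r : ℕ, f r = ∑ π : Equiv.Perm (Fin n),
      θ ^ (Finset.univ.filter fun i : Fin n => (i : ℕ) < r ∧ π i = i).card) :
    (∀ r₁ r₂ : ℕ, r₂ < r₁ → r₁ ≤ n → f r₂ < f r₁) ∧
      (∀ r₁ r₂ : ℕ, r₁ ≤ n → r₂ ≤ n → (f r₁ > f r₂ ↔ r₁ > r₂)) := by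
  have key : ∀ r : ℕ, r < n → f r < f (r + 1) := by
    intro r hr
    rw [hf, hf]
    apply Finset.sum_lt_sum
    · intro π _
      apply pow_le_pow_right₀ (le_of_lt hθ)
      apply Finset.card_le_card
      intro i hi
      simp only [Finset.mem_filter] at hi ⊢
      exact ⟨hi.1, Nat.lt_succ_of_lt hi.2.1, hi.2.2⟩
    · refine ⟨1, Finset.mem_univ _, ?_⟩
      apply pow_lt_pow_right₀ hθ
      apply Finset.card_lt_card
      constructor
      · intro i hi
        simp only [Finset.mem_filter] at hi ⊢
        exact ⟨hi.1, Nat.lt_succ_of_lt hi.2.1, hi.2.2⟩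
      · intro hsub
        have := hsub (Finset.mem_filter.mpr ⟨Finset.mem_univ (⟨r, hr⟩ : Fin n),
          Nat.lt_succ_self r, rfl⟩)
        simp at this
  have mono : ∀ r₁ r₂ : ℕ, r₂ < r₁ → r₁ ≤ n → f r₂ < f r₁ := by
    intro r₁ r₂ h h1
    induction r₁ with
    | zero => omega
    | succ k ih =>
      rcases Nat.lt_or_ge r₂ k with hk | hk
      · exact (ih hk (by omega)).trans (key k (by omega))
      · have : r₂ = k := by omega
        subst this
        exact key r₂ (by omega)
  refine ⟨mono, fun r₁ r₂ h1 h2 => ?_⟩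
  constructor
  · intro hgt
    by_contra hle
    push_neg at hle
    rcases Nat.lt_or_ge r₁ r₂ with h | h
    · exact absurd (mono r₂ r₁ h h2) (by linarith)
    · have : r₁ = r₂ := by omega
      subst this; linarith
  · intro h
    exact mono r₁ r₂ h h1
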